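/- For all a, a' ∈ E with a ≠ 0 and a' ≠ 0, there exists an E-linear automorphism g of V satisfying g ∘ φ = φ ∘ g, g(L_a) = L_{a'} and g(P_a) = P_{a'} if and only if a = a'. (This is the crystalline Galois side of Theorem 1.1(1): via the functor D_cris, the crystalline representations V(α, h, a) and V(α, h, a') of Gal(Q̄_p/Q_p) are isomorphic if and only if a = a'.) -/

import Mathlib

open Submodule

noncomputable section

variable (E : Type*) [Field E]

/-- The ambient 3-dimensional space `V = E³`. -/
abbrev V3 (E : Type*) [Field E] := Fin 3 → E

/-- The standard basis vectors `e₁, e₂, e₃` (indexed by `0, 1, 2`). -/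
def e3 (i : Fin 3) : V3 E := Pi.single i 1

/-- The diagonal endomorphism `φ` with `φ(eᵢ) = αᵢ • eᵢ`. -/
def phi3 (α : Fin 3 → E) : V3 E →ₗ[E] V3 E where
  toFun v := fun i => α i * v i
  map_add' u v := by funext i; simp [mul_add]
  map_smul' c v := by funext i; simp [smul_eq_mul]; ring

/-- The line `L_a = span{e₁ + a•e₂ + e₃}`. -/
def La (a : E) : Submodule E (V3 E) :=
  span E {e3 E 0 + a • e3 E 1 + e3 E 2}

/-- The plane `P_a = span{e₁ + e₂, e₁ + a•e₂ + e₃}`. -/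
def Pa (a : E) : Submodule E (V3 E) :=
  span E {e3 E 0 + e3 E 1, e3 E 0 + a • e3 E 1 + e3 E 2}

/-- `(F¹, F²)` is a complete flag: `F¹ ⊆ F²` with `dim F¹ = 1`, `dim F² = 2`. -/
def IsCompleteFlag (F1 F2 : Submodule E (V3 E)) : Prop :=
  F1 ≤ F2 ∧ Module.finrank E ↥F1 = 1 ∧ Module.finrank E ↥F2 = 2

/-- The flag `(F¹, F²)` is stable under `φ`. -/
def PhiStable (α : Fin 3 → E) (F1 F2 : Submodule E (V3 E)) : Prop :=
  F1.map (phi3 E α) ≤ F1 ∧ F2.map (phi3 E α) ≤ F2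

/-- Two complete flags `(F¹, F²)` and `(G¹, G²)` are in general position:
`dim (Fⁱ ⊓ Gʲ) = max 0 (i + j - 3)` for `i, j ∈ {1, 2}`. -/
def GenPos (F1 F2 G1 G2 : Submodule E (V3 E)) : Prop :=
  Module.finrank E ↥(F1 ⊓ G1) = 0 ∧ Module.finrank E ↥(F1 ⊓ G2) = 0 ∧
  Module.finrank E ↥(F2 ⊓ G1) = 0 ∧ Module.finrank E ↥(F2 ⊓ G2) = 1

/-- For nonzero `a, a'`, there is an `E`-linear automorphism `g` of `V`
commuting with `φ` with `g(L_a) = L_{a'}` and `g(P_a) = P_{a'}` iff `a = a'`. -/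
theorem stmt0 (α : Fin 3 → E) (hα0 : ∀ i, α i ≠ 0) (hα : Function.Injective α)
    (a a' : E) (ha : a ≠ 0) (ha' : a' ≠ 0) :
    (∃ g : V3 E ≃ₗ[E] V3 E,
        (∀ v, g (phi3 E α v) = phi3 E α (g v)) ∧
        (La E a).map g.toLinearMap = La E a' ∧
        (Pa E a).map g.toLinearMap = Pa E a') ↔ a = a' := by
  constructor
  · rintro ⟨g, hcomm, hL, hP⟩
    -- g is diagonal: off-diagonal entries vanish
    have hdiag : ∀ i j : Fin 3, j ≠ i → g (e3 E i) j = 0 := by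
      intro i j hij
      have h2 : phi3 E α (e3 E i) = α i • e3 E i := by
        funext k
        by_cases h : k = i
        · subst h; simp [phi3, e3]
        · simp [phi3, e3, Pi.single_apply, h]
      have h1 := congrFun (hcomm (e3 E i)) j
      rw [h2, map_smul] at h1
      have h3 : α i * g (e3 E i) j = α j * g (e3 E i) j := by
        simpa [phi3, smul_eq_mul] using h1
      have h4 : (α i - α j) * g (e3 E i) j = 0 := by
        rw [sub_mul, h3, sub_self]
      exact (mul_eq_zero.mp h4).resolve_left
        (sub_ne_zero.mpr (fun h => hij (hα h).symm))
    have hgi : ∀ i : Fin 3, g (e3 E i) = (g (e3 E i) i) • e3 E i := by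
      intro i; funext j
      by_cases h : j = i
      · subst h; simp [e3]
      · simp only [e3, Pi.smul_apply, Pi.single_apply, h, if_false, smul_zero]
        exact hdiag i j h
    set c : Fin 3 → E := fun i => g (e3 E i) i with hc
    -- value of g on the generator of L_a
    have hw : e3 E 0 + a • e3 E 1 + e3 E 2 ∈ La E a :=
      subset_span rfl
    have hgw : g (e3 E 0 + a • e3 E 1 + e3 E 2) ∈ La E a' := by
      rw [← hL]
      exact ⟨_, hw, rfl⟩
    obtain ⟨t, ht⟩ := mem_span_singleton.mp hgw
    have hp : e3 E 0 + e3 E 1 ∈ Pa E a :=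
      subset_span (Or.inl rfl)
    have hgp : g (e3 E 0 + e3 E 1) ∈ Pa E a' := by
      rw [← hP]
      exact ⟨_, hp, rfl⟩
    obtain ⟨s, u, hsu⟩ := mem_span_pair.mp hgp
    -- expand g on the generators
    have hgw' : g (e3 E 0 + a • e3 E 1 + e3 E 2)
        = c 0 • e3 E 0 + (a * c 1) • e3 E 1 + c 2 • e3 E 2 := by
      rw [map_add, map_add, map_smul, hgi 0, hgi 1, hgi 2]
      simp [mul_smul, mul_comm]
      rfl
    have hgp' : g (e3 E 0 + e3 E 1) = c 0 • e3 E 0 + c 1 • e3 E 1 := by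
      rw [map_add, hgi 0, hgi 1]
    rw [hgw'] at ht
    rw [hgp'] at hsu
    have ht0 := congrFun ht 0
    have ht1 := congrFun ht 1
    have ht2 := congrFun ht 2
    have hs0 := congrFun hsu 0
    have hs1 := congrFun hsu 1
    have hs2 := congrFun hsu 2
    simp [e3, Pi.single_apply, Fin.ext_iff] at ht0 ht1 ht2 hs0 hs1 hs2
    -- ht0 : t = c 0, ht1 : t * a' = a * c 1, ht2 : t = c 2
    -- hs2 : u = 0, hs0 : s + u = c 0, hs1 : s + u * a' = c 1
    have hc0 : c 0 ≠ 0 := by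
      intro h0
      have : g (e3 E 0) = 0 := by
        rw [hgi 0]
        have h1 : g (e3 E 0) 0 = c 0 := rfl
        rw [h1, h0, zero_smul]
      have he : e3 E 0 = (0 : V3 E) := by
        have := g.injective (by simpa using this)
        simpa using this
      have := congrFun he 0
      simp [e3] at this
    subst hs2
    simp at hs0 hs1
    -- now hs0 : s = c 0, hs1 : s = c 1
    rw [ht0, ← hs1, hs0] at ht1
    -- ht1 : c 0 * a' = a * c 0
    exact (mul_left_cancel₀ hc0 (ht1.trans (mul_comm a (c 0)))).symm
  · rintro rfl
    exact ⟨LinearEquiv.refl E (V3 E), fun v => rfl, by simp, by simp⟩
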